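/- Every solution of the four-body system in the center-of-mass frame satisfies, for all t ∈ ℝ, r₁(t) = ½(r₁₃(0) cos ωt + r₁₃⁺(0) cos 2ωt) + (1/(4mω))(2p₁₃(0) sin ωt + p₁₃⁺(0) sin 2ωt) and r₂(t) = ½(r₂₄(0) cos ωt + r₂₄⁺(0) cos 2ωt) + (1/(4mω))(2p₂₄(0) sin ωt + p₂₄⁺(0) sin 2ωt). -/

import Mathlib

noncomputable section

variable {F : Type*} [NormedAddCommGroup F] [NormedSpace ℝ F]

lemma osc (k : ℝ) (hk : k ≠ 0) (f : ℝ → F)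
    (h1 : Differentiable ℝ f) (h2 : Differentiable ℝ (deriv f))
    (hode : ∀ t, deriv (deriv f) t = (-(k ^ 2)) • f t) :
    ∀ t, f t = Real.cos (k * t) • f 0 + (Real.sin (k * t) / k) • deriv f 0 := by
  have hkt : ∀ t : ℝ, HasDerivAt (fun s : ℝ => k * s) k t := fun t => by
    simpa using (hasDerivAt_id t).const_mul k
  set g : ℝ → F := fun t => Real.cos (k * t) • f t + (-(Real.sin (k * t) / k)) • deriv f t with hgdef
  set h : ℝ → F := fun t => Real.sin (k * t) • f t + (Real.cos (k * t) / k) • deriv f t with hhdef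
  have hgd : ∀ t, HasDerivAt g 0 t := by
    intro t
    have hc : HasDerivAt (fun s => Real.cos (k * s)) (-Real.sin (k * t) * k) t := (hkt t).cos
    have hs : HasDerivAt (fun s => -(Real.sin (k * s) / k)) (-(Real.cos (k * t) * k / k)) t := by
      exact (((hkt t).sin).div_const k).neg
    have H : HasDerivAt g _ t := (hc.smul (h1 t).hasDerivAt).add (hs.smul ((h2 t).hasDerivAt))
    convert H using 1
    rw [hode t]
    match_scalars <;> (field_simp; try ring)
  have hhd : ∀ t, HasDerivAt h 0 t := by
    intro t
    have hc : HasDerivAt (fun s => Real.sin (k * s)) (Real.cos (k * t) * k) t := (hkt t).sin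
    have hs : HasDerivAt (fun s => Real.cos (k * s) / k) (-Real.sin (k * t) * k / k) t :=
      ((hkt t).cos).div_const k
    have H : HasDerivAt h _ t := (hc.smul (h1 t).hasDerivAt).add (hs.smul ((h2 t).hasDerivAt))
    convert H using 1
    rw [hode t]
    match_scalars <;> (field_simp; try ring)
  have hgc : ∀ t, g t = g 0 :=
    fun t => is_const_of_deriv_eq_zero (fun s => (hgd s).differentiableAt)
      (fun s => (hgd s).deriv) t 0
  have hhc : ∀ t, h t = h 0 :=
    fun t => is_const_of_deriv_eq_zero (fun s => (hhd s).differentiableAt)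
      (fun s => (hhd s).deriv) t 0
  intro t
  have hg0 : g t = f 0 := by
    rw [hgc t]; simp [hgdef]
  have hh0 : h t = (1 / k) • deriv f 0 := by
    rw [hhc t]; simp [hhdef]
  have key : Real.cos (k * t) • g t + Real.sin (k * t) • h t = f t := by
    simp only [hgdef, hhdef]
    match_scalars
    · nlinarith [Real.sin_sq_add_cos_sq (k * t)]
    · field_simp; ring
  rw [hg0, hh0] at key
  rw [← key]
  match_scalars <;> (field_simp; try ring)


/-- The Euclidean plane. -/
abbrev Plane : Type := EuclideanSpace ℝ (Fin 2)

/-- A solution of the planar four-body system with pairwise quadratic potential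
`V = (mω²/4)(2‖r₁−r₂‖² + 2‖r₂−r₃‖² + 2‖r₃−r₄‖² + 2‖r₁−r₄‖² − ‖r₁−r₃‖² − ‖r₂−r₄‖²)`:
four twice differentiable curves satisfying Newton's equations
`rᵢ'' = −ω²((rᵢ − r_{i+1}) + (rᵢ − r_{i−1}) − ½(rᵢ − r_{i+2}))` (indices mod 4). -/
def IsFourBodySolution (ω : ℝ) (r₁ r₂ r₃ r₄ : ℝ → Plane) : Prop :=
  (Differentiable ℝ r₁ ∧ Differentiable ℝ (deriv r₁)) ∧
  (Differentiable ℝ r₂ ∧ Differentiable ℝ (deriv r₂)) ∧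
  (Differentiable ℝ r₃ ∧ Differentiable ℝ (deriv r₃)) ∧
  (Differentiable ℝ r₄ ∧ Differentiable ℝ (deriv r₄)) ∧
  (∀ t : ℝ, deriv (deriv r₁) t =
    (-(ω ^ 2)) • ((r₁ t - r₂ t) + (r₁ t - r₄ t) - (1 / 2 : ℝ) • (r₁ t - r₃ t))) ∧
  (∀ t : ℝ, deriv (deriv r₂) t =
    (-(ω ^ 2)) • ((r₂ t - r₃ t) + (r₂ t - r₁ t) - (1 / 2 : ℝ) • (r₂ t - r₄ t))) ∧
  (∀ t : ℝ, deriv (deriv r₃) t =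
    (-(ω ^ 2)) • ((r₃ t - r₄ t) + (r₃ t - r₂ t) - (1 / 2 : ℝ) • (r₃ t - r₁ t))) ∧
  (∀ t : ℝ, deriv (deriv r₄) t =
    (-(ω ^ 2)) • ((r₄ t - r₁ t) + (r₄ t - r₃ t) - (1 / 2 : ℝ) • (r₄ t - r₂ t)))

/-- Every center-of-mass-frame solution of the four-body system has the
explicit trigonometric form given in the paper, for bodies 1 and 2. -/
theorem general_solution_form (m ω : ℝ) (hm : 0 < m) (hω : 0 < ω)
    (r₁ r₂ r₃ r₄ : ℝ → Plane)
    (hsol : IsFourBodySolution ω r₁ r₂ r₃ r₄)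
    (hcomr : r₁ 0 + r₂ 0 + r₃ 0 + r₄ 0 = 0)
    (hcomp : m • deriv r₁ 0 + m • deriv r₂ 0 + m • deriv r₃ 0 + m • deriv r₄ 0 = 0) :
    ∀ t : ℝ,
      r₁ t = (Real.cos (ω * t) / 2) • (r₁ 0 - r₃ 0)
              + (Real.cos (2 * ω * t) / 2) • (r₁ 0 + r₃ 0)
              + (Real.sin (ω * t) / (2 * m * ω)) • (m • deriv r₁ 0 - m • deriv r₃ 0)
              + (Real.sin (2 * ω * t) / (4 * m * ω)) • (m • deriv r₁ 0 + m • deriv r₃ 0)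
      ∧
      r₂ t = (Real.cos (ω * t) / 2) • (r₂ 0 - r₄ 0)
              + (Real.cos (2 * ω * t) / 2) • (r₂ 0 + r₄ 0)
              + (Real.sin (ω * t) / (2 * m * ω)) • (m • deriv r₂ 0 - m • deriv r₄ 0)
              + (Real.sin (2 * ω * t) / (4 * m * ω)) • (m • deriv r₂ 0 + m • deriv r₄ 0) := by
  obtain ⟨⟨h1d, h1d2⟩, ⟨h2d, h2d2⟩, ⟨h3d, h3d2⟩, ⟨h4d, h4d2⟩, e1, e2, e3, e4⟩ := hsol
  have hm' : m ≠ 0 := ne_of_gt hm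
  have hω' : ω ≠ 0 := ne_of_gt hω
  -- the center of mass stays at 0
  have hSd : ∀ t, deriv (fun s => r₁ s + r₂ s + r₃ s + r₄ s) t
      = deriv r₁ t + deriv r₂ t + deriv r₃ t + deriv r₄ t := by
    intro t
    show deriv (r₁ + r₂ + r₃ + r₄) t = _
    rw [deriv_add (((h1d t).add (h2d t)).add (h3d t)) (h4d t),
      deriv_add ((h1d t).add (h2d t)) (h3d t), deriv_add (h1d t) (h2d t)]
  have hSdd : ∀ t, deriv (deriv (fun s => r₁ s + r₂ s + r₃ s + r₄ s)) t = 0 := by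
    intro t
    have : deriv (fun s => r₁ s + r₂ s + r₃ s + r₄ s)
        = fun t => deriv r₁ t + deriv r₂ t + deriv r₃ t + deriv r₄ t := funext hSd
    rw [this]
    show deriv (deriv r₁ + deriv r₂ + deriv r₃ + deriv r₄) t = 0
    rw [deriv_add (((h1d2 t).add (h2d2 t)).add (h3d2 t)) (h4d2 t),
      deriv_add ((h1d2 t).add (h2d2 t)) (h3d2 t), deriv_add (h1d2 t) (h2d2 t),
      e1 t, e2 t, e3 t, e4 t]
    module
  have hSd0 : deriv r₁ 0 + deriv r₂ 0 + deriv r₃ 0 + deriv r₄ 0 = 0 := by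
    have h := hcomp
    rw [← smul_add, ← smul_add, ← smul_add] at h
    exact (smul_eq_zero.mp h).resolve_left hm'
  have hSdconst : ∀ t, deriv (fun s => r₁ s + r₂ s + r₃ s + r₄ s) t = 0 := by
    intro t
    have hdiff : Differentiable ℝ (deriv (fun s => r₁ s + r₂ s + r₃ s + r₄ s)) := by
      rw [show deriv (fun s => r₁ s + r₂ s + r₃ s + r₄ s)
        = fun t => deriv r₁ t + deriv r₂ t + deriv r₃ t + deriv r₄ t from funext hSd]
      exact ((h1d2.add h2d2).add h3d2).add h4d2
    have := is_const_of_deriv_eq_zero hdiff hSdd t 0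
    rw [this, hSd 0, hSd0]
  have hS0 : ∀ t, r₁ t + r₂ t + r₃ t + r₄ t = 0 := by
    intro t
    have hdiff : Differentiable ℝ (fun s => r₁ s + r₂ s + r₃ s + r₄ s) :=
      ((h1d.add h2d).add h3d).add h4d
    have := is_const_of_deriv_eq_zero hdiff hSdconst t 0
    simpa [hcomr] using this
  -- differences and sums
  have hsub : ∀ (f g : ℝ → Plane), Differentiable ℝ f → Differentiable ℝ g →
      deriv (fun s => f s - g s) = fun t => deriv f t - deriv g t :=
    fun f g hf hg => funext fun t => deriv_sub (hf t) (hg t)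
  have hadd : ∀ (f g : ℝ → Plane), Differentiable ℝ f → Differentiable ℝ g →
      deriv (fun s => f s + g s) = fun t => deriv f t + deriv g t :=
    fun f g hf hg => funext fun t => deriv_add (hf t) (hg t)
  -- helper to apply osc to a sum/difference combo
  have key : ∀ (a b : ℝ → Plane), Differentiable ℝ a → Differentiable ℝ (deriv a) →
      Differentiable ℝ b → Differentiable ℝ (deriv b) →
      (∀ t, deriv (deriv a) t - deriv (deriv b) t = (-(ω ^ 2)) • (a t - b t)) →
      ∀ t, a t - b t = Real.cos (ω * t) • (a 0 - b 0)
        + (Real.sin (ω * t) / ω) • (deriv a 0 - deriv b 0) := by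
    intro a b ha ha2 hb hb2 hode t
    have h1 : Differentiable ℝ (fun s => a s - b s) := ha.sub hb
    have h2 : Differentiable ℝ (deriv (fun s => a s - b s)) := by
      rw [hsub a b ha hb]; exact ha2.sub hb2
    have h3 : ∀ t, deriv (deriv (fun s => a s - b s)) t
        = (-(ω ^ 2)) • ((fun s => a s - b s) t) := by
      intro t
      rw [hsub a b ha hb]
      show deriv (deriv a - deriv b) t = _
      rw [deriv_sub (ha2 t) (hb2 t)]
      exact hode t
    have := osc ω hω' (fun s => a s - b s) h1 h2 h3 t
    simpa [hsub a b ha hb] using this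
  have key2 : ∀ (a b : ℝ → Plane), Differentiable ℝ a → Differentiable ℝ (deriv a) →
      Differentiable ℝ b → Differentiable ℝ (deriv b) →
      (∀ t, deriv (deriv a) t + deriv (deriv b) t = (-((2 * ω) ^ 2)) • (a t + b t)) →
      ∀ t, a t + b t = Real.cos (2 * ω * t) • (a 0 + b 0)
        + (Real.sin (2 * ω * t) / (2 * ω)) • (deriv a 0 + deriv b 0) := by
    intro a b ha ha2 hb hb2 hode t
    have h1 : Differentiable ℝ (fun s => a s + b s) := ha.add hb
    have h2 : Differentiable ℝ (deriv (fun s => a s + b s)) := by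
      rw [hadd a b ha hb]; exact ha2.add hb2
    have h3 : ∀ t, deriv (deriv (fun s => a s + b s)) t
        = (-((2 * ω) ^ 2)) • ((fun s => a s + b s) t) := by
      intro t
      rw [hadd a b ha hb]
      show deriv (deriv a + deriv b) t = _
      rw [deriv_add (ha2 t) (hb2 t)]
      exact hode t
    have := osc (2 * ω) (by positivity) (fun s => a s + b s) h1 h2 h3 t
    simpa [hadd a b ha hb] using this
  intro t
  -- equation for r₁ - r₃
  have hu1 := key r₁ r₃ h1d h1d2 h3d h3d2 (fun s => by rw [e1 s, e3 s]; module) t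
  have hu2 := key r₂ r₄ h2d h2d2 h4d h4d2 (fun s => by rw [e2 s, e4 s]; module) t
  -- equations for sums, using center of mass
  have hv1 := key2 r₁ r₃ h1d h1d2 h3d h3d2 (fun s => by
    have h24 : r₂ s = -(r₁ s) - r₃ s - r₄ s := by
      have h := hS0 s
      have : r₂ s = (r₁ s + r₂ s + r₃ s + r₄ s) - r₁ s - r₃ s - r₄ s := by abel
      rw [this, h]; abel
    rw [e1 s, e3 s, h24]; module) t
  have hv2 := key2 r₂ r₄ h2d h2d2 h4d h4d2 (fun s => by
    have h13 : r₁ s = -(r₂ s) - r₃ s - r₄ s := by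
      have h := hS0 s
      have : r₁ s = (r₁ s + r₂ s + r₃ s + r₄ s) - r₂ s - r₃ s - r₄ s := by abel
      rw [this, h]; abel
    rw [e2 s, e4 s, h13]; module) t
  constructor
  · have hr : r₁ t = (1 / 2 : ℝ) • ((r₁ t - r₃ t) + (r₁ t + r₃ t)) := by module
    rw [hr, hu1, hv1]
    match_scalars <;> (field_simp; try ring)
  · have hr : r₂ t = (1 / 2 : ℝ) • ((r₂ t - r₄ t) + (r₂ t + r₄ t)) := by module
    rw [hr, hu2, hv2]
    match_scalars <;> (field_simp; try ring)
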